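/- Let L, M, N ⊆ [m] with s := |L| + |M| + |N| satisfying 1 ≤ s and (L, M, N) ≠ ([m], [m], [m]). Let C′ be the image of the F_2-linear map (F_2^m)³ → F_2^{E} sending (α,β,γ) to the vector whose coordinate at (d₁,d₂,d₃) ∈ E is α·d₁ + (β+γ)·d₂ + β·d₃, where E = (F_2^m × F_2^m × F_2^m) \ (Δ_L × Δ_M × Δ_N). Then C′ is a binary linear code of length 2^{3m} − 2^s, dimension 3m, and minimum distance 2^{3m−1} − 2^{s−1}; its weight enumerator equals 1 + (2^{3m} − 2^{3m−s})·X^{2^{3m−1} − 2^{s−1}} + (2^{3m−s} − 1)·X^{2^{3m−1}} (so C′ is a 2-weight code); and C′ is a Griesmer code, i.e., Σ_{i=0}^{3m−1} ⌈(2^{3m−1} − 2^{s−1})/2^i⌉ = 2^{3m} − 2^s. -/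

import Mathlib

open Finset Polynomial
open scoped Classical

/-- `V m` is the vector space `F₂^m`. -/
abbrev V (m : ℕ) := Fin m → ZMod 2

/-- Dot product `x·y = Σ_i x_i y_i` in `F₂`. -/
def dot {m : ℕ} (x y : V m) : ZMod 2 := ∑ i, x i * y i

/-- `Supp v = {i : v i ≠ 0}`. -/
def supp {m : ℕ} (v : V m) : Finset (Fin m) := Finset.univ.filter fun i => v i ≠ 0

/-- The simplicial complex `Δ_L = {v : Supp v ⊆ L}` generated by `L`. -/
def Δ {m : ℕ} (L : Finset (Fin m)) : Finset (V m) := Finset.univ.filter fun v => supp v ⊆ L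

/-- Hamming weight of a vector. -/
def wtv {ι : Type} [Fintype ι] (c : ι → ZMod 2) : ℕ :=
  (Finset.univ.filter fun i => c i ≠ 0).card

/-- The linear functional `x ↦ x·y`. -/
noncomputable def dotL {m : ℕ} (y : V m) : V m →ₗ[ZMod 2] ZMod 2 :=
  ∑ i, LinearMap.smulRight (LinearMap.proj i) (y i)

/-- The linear map `(α,β,γ) ↦ ((d₁,d₂,d₃) ↦ α·d₁ + (β+γ)·d₂ + β·d₃)` whose range is the
binary code `C(D₁,D₂,D₃)`. -/
noncomputable def codeMap {m : ℕ} (D₁ D₂ D₃ : Finset (V m)) :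
    (V m × V m × V m) →ₗ[ZMod 2]
      (({x // x ∈ D₁} × {x // x ∈ D₂} × {x // x ∈ D₃}) → ZMod 2) :=
  LinearMap.pi fun d =>
    (dotL d.1.1).comp (LinearMap.fst (ZMod 2) (V m) (V m × V m))
    + (dotL d.2.1.1).comp
        (((LinearMap.fst (ZMod 2) (V m) (V m)).comp (LinearMap.snd (ZMod 2) (V m) (V m × V m)))
          + ((LinearMap.snd (ZMod 2) (V m) (V m)).comp (LinearMap.snd (ZMod 2) (V m) (V m × V m))))
    + (dotL d.2.2.1).comp
        ((LinearMap.fst (ZMod 2) (V m) (V m)).comp (LinearMap.snd (ZMod 2) (V m) (V m × V m)))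

lemma codeMap_apply {m : ℕ} (D₁ D₂ D₃ : Finset (V m)) (α β γ : V m)
    (d : {x // x ∈ D₁} × {x // x ∈ D₂} × {x // x ∈ D₃}) :
    codeMap D₁ D₂ D₃ (α, β, γ) d = dot α d.1.1 + dot (β + γ) d.2.1.1 + dot β d.2.2.1 := by
  simp [codeMap, dotL, dot, LinearMap.smulRight, mul_comm]

/-- The linear map `(α,β,γ) ↦ ((d₁,d₂,d₃) ↦ α·d₁ + (β+γ)·d₂ + β·d₃)` on an arbitrary
index set `E ⊆ F₂^m × F₂^m × F₂^m` of coordinates. -/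
noncomputable def codeMapE {m : ℕ} (E : Finset (V m × V m × V m)) :
    (V m × V m × V m) →ₗ[ZMod 2] ({x // x ∈ E} → ZMod 2) :=
  LinearMap.pi fun d =>
    (dotL d.1.1).comp (LinearMap.fst (ZMod 2) (V m) (V m × V m))
    + (dotL d.1.2.1).comp
        (((LinearMap.fst (ZMod 2) (V m) (V m)).comp (LinearMap.snd (ZMod 2) (V m) (V m × V m)))
          + ((LinearMap.snd (ZMod 2) (V m) (V m)).comp (LinearMap.snd (ZMod 2) (V m) (V m × V m))))
    + (dotL d.1.2.2).comp
        ((LinearMap.fst (ZMod 2) (V m) (V m)).comp (LinearMap.snd (ZMod 2) (V m) (V m × V m)))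

lemma zmod2_ne_zero_iff : ∀ x : ZMod 2, x ≠ 0 ↔ x = 1 := by decide
lemma zmod2_ne_one_iff : ∀ x : ZMod 2, x ≠ 1 ↔ x = 0 := by decide

open scoped Classical in
lemma count_dot {I : Type} [Fintype I] (y : I → ZMod 2) (hy : y ≠ 0) :
    ((univ : Finset (I → ZMod 2)).filter (fun x => (∑ i, x i * y i) = 1)).card
      = 2 ^ (Fintype.card I - 1) := by
  classical
  obtain ⟨i₀, hi₀⟩ : ∃ i, y i ≠ 0 := by
    by_contra h; push_neg at h; exact hy (funext h)
  have hyi : y i₀ = 1 := (zmod2_ne_zero_iff _).mp hi₀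
  set S1 := (univ : Finset (I → ZMod 2)).filter (fun x => (∑ i, x i * y i) = 1) with hS1
  set S0 := (univ : Finset (I → ZMod 2)).filter (fun x => (∑ i, x i * y i) = 0) with hS0
  have hsum : ∀ x : I → ZMod 2,
      (∑ i, (Function.update x i₀ (x i₀ + 1)) i * y i) = (∑ i, x i * y i) + 1 := by
    intro x
    rw [Fintype.sum_eq_add_sum_compl i₀, Fintype.sum_eq_add_sum_compl i₀ (fun i => x i * y i)]
    have : ∀ i ∈ ({i₀}ᶜ : Finset I), (Function.update x i₀ (x i₀ + 1)) i * y i = x i * y i := by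
      intro i hi
      rw [Function.update_of_ne (by simpa using hi)]
    rw [Finset.sum_congr rfl this, Function.update_self, hyi]
    ring
  have hcard01 : S1.card = S0.card := by
    apply Finset.card_bij' (fun x _ => Function.update x i₀ (x i₀ + 1))
      (fun x _ => Function.update x i₀ (x i₀ + 1))
    · intro a _; funext i
      by_cases hi : i = i₀
      · subst hi; simp [add_assoc, CharTwo.add_self_eq_zero]
      · simp [Function.update_of_ne hi]
    · intro a _; funext i
      by_cases hi : i = i₀
      · subst hi; simp [add_assoc, CharTwo.add_self_eq_zero]
      · simp [Function.update_of_ne hi]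
    · intro a ha
      simp only [hS1, mem_filter, mem_univ, true_and] at ha
      simp only [hS0, mem_filter, mem_univ, true_and, hsum a, ha]
      decide
    · intro a ha
      simp only [hS0, mem_filter, mem_univ, true_and] at ha
      simp only [hS1, mem_filter, mem_univ, true_and, hsum a, ha]
      decide
  have hpart : S1.card + S0.card = 2 ^ Fintype.card I := by
    have h0 : S0 = (univ : Finset (I → ZMod 2)).filter (fun x => ¬ (∑ i, x i * y i) = 1) := by
      ext x; simp [hS0, zmod2_ne_one_iff]
    rw [h0, hS1, Finset.card_filter_add_card_filter_not]
    simp [Fintype.card_fun]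
  have hne' : 1 ≤ Fintype.card I := Fintype.card_pos_iff.mpr ⟨i₀⟩
  have h2 : 2 ^ Fintype.card I = 2 ^ (Fintype.card I - 1) * 2 := by
    rw [← pow_succ]; congr 1; omega
  omega

lemma mem_Δ {m : ℕ} {L : Finset (Fin m)} {v : V m} : v ∈ Δ L ↔ ∀ i, i ∉ L → v i = 0 := by
  simp only [Δ, supp, Finset.mem_filter, Finset.mem_univ, true_and, Finset.subset_iff]
  exact forall_congr' fun i => by tauto

noncomputable def ext0 {m : ℕ} (L : Finset (Fin m)) (f : {i // i ∈ L} → ZMod 2) : V m :=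
  fun i => if h : i ∈ L then f ⟨i, h⟩ else 0

lemma ext0_coe {m : ℕ} {L : Finset (Fin m)} (f : {i // i ∈ L} → ZMod 2) (i : {i // i ∈ L}) :
    ext0 L f i.1 = f i := by
  simp [ext0, i.2]

lemma ext0_mem_Δ {m : ℕ} (L : Finset (Fin m)) (f : {i // i ∈ L} → ZMod 2) :
    ext0 L f ∈ Δ L := mem_Δ.mpr (fun i hi => by simp [ext0, hi])

open scoped Classical in
lemma delta_card {m : ℕ} (L : Finset (Fin m)) : (Δ L).card = 2 ^ L.card := by
  have h : (Δ L).card = (univ : Finset ({i // i ∈ L} → ZMod 2)).card := by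
    apply Finset.card_bij' (fun v _ => fun i : {i // i ∈ L} => v i.1) (fun f _ => ext0 L f)
    case hi => intro v _; exact mem_univ _
    case hj => intro f _; exact ext0_mem_Δ L f
    case left_inv =>
      intro v hv
      funext i
      by_cases hi : i ∈ L
      · simp [ext0, hi]
      · simp [ext0, hi, (mem_Δ.mp hv) i hi]
    case right_inv =>
      intro f _
      funext i
      exact ext0_coe f i
  rw [h, Finset.card_univ]
  simp [Fintype.card_fun]

lemma dot_mem_delta {m : ℕ} (L : Finset (Fin m)) (a v : V m) (hv : v ∈ Δ L) :
    dot a v = ∑ i : {i // i ∈ L}, v i.1 * a i.1 := by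
  have : dot a v = ∑ i : Fin m, v i * a i := by
    rw [dot]; exact Finset.sum_congr rfl (fun i _ => mul_comm _ _)
  rw [this, Finset.sum_coe_sort L (fun i => v i * a i)]
  exact (Finset.sum_subset L.subset_univ (fun i _ hi => by simp [mem_Δ.mp hv i hi])).symm

open scoped Classical in
lemma count_delta {m : ℕ} (L M N : Finset (Fin m)) (a b c : V m)
    (h : (∃ i ∈ L, a i ≠ 0) ∨ (∃ i ∈ M, b i ≠ 0) ∨ (∃ i ∈ N, c i ≠ 0)) :
    ((Δ L ×ˢ Δ M ×ˢ Δ N).filter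
        (fun d : V m × V m × V m => dot a d.1 + dot b d.2.1 + dot c d.2.2 = 1)).card
      = 2 ^ (L.card + M.card + N.card - 1) := by
  have hyne : (Sum.elim (fun i : {i // i ∈ L} => a i.1)
      (Sum.elim (fun i : {i // i ∈ M} => b i.1) (fun i : {i // i ∈ N} => c i.1))
        : _ → ZMod 2) ≠ 0 := by
    rcases h with ⟨i, hi, hai⟩ | ⟨i, hi, hbi⟩ | ⟨i, hi, hci⟩
    · intro h0; exact hai (congrFun h0 (Sum.inl ⟨i, hi⟩))
    · intro h0; exact hbi (congrFun h0 (Sum.inr (Sum.inl ⟨i, hi⟩)))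
    · intro h0; exact hci (congrFun h0 (Sum.inr (Sum.inr ⟨i, hi⟩)))
  have key := count_dot _ hyne
  have hcardI : Fintype.card ({i // i ∈ L} ⊕ ({i // i ∈ M} ⊕ {i // i ∈ N}))
      = L.card + M.card + N.card := by
    simp [Fintype.card_coe]; ring
  rw [hcardI] at key
  rw [← key]
  apply Finset.card_bij'
    (fun d _ => fun j : {i // i ∈ L} ⊕ ({i // i ∈ M} ⊕ {i // i ∈ N}) =>
      Sum.elim (fun i : {i // i ∈ L} => d.1 i.1)
        (Sum.elim (fun i : {i // i ∈ M} => d.2.1 i.1) (fun i : {i // i ∈ N} => d.2.2 i.1)) j)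
    (fun x _ => (ext0 L (fun i => x (Sum.inl i)),
                 ext0 M (fun i => x (Sum.inr (Sum.inl i))),
                 ext0 N (fun i => x (Sum.inr (Sum.inr i)))))
  case hi =>
    intro d hd
    simp only [Finset.mem_filter, Finset.mem_product] at hd
    obtain ⟨⟨h1, h2, h3⟩, hsum⟩ := hd
    simp only [Finset.mem_filter, Finset.mem_univ, true_and]
    rw [Fintype.sum_sum_type, Fintype.sum_sum_type]
    simp only [Sum.elim_inl, Sum.elim_inr]
    rw [dot_mem_delta L a d.1 h1, dot_mem_delta M b d.2.1 h2, dot_mem_delta N c d.2.2 h3]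
      at hsum
    rw [← hsum]
    ring
  case hj =>
    intro x hx
    simp only [Finset.mem_filter, Finset.mem_univ, true_and] at hx
    simp only [Finset.mem_filter, Finset.mem_product]
    refine ⟨⟨ext0_mem_Δ L _, ext0_mem_Δ M _, ext0_mem_Δ N _⟩, ?_⟩
    rw [dot_mem_delta L a _ (ext0_mem_Δ L _), dot_mem_delta M b _ (ext0_mem_Δ M _),
        dot_mem_delta N c _ (ext0_mem_Δ N _)]
    simp only [ext0_coe]
    rw [Fintype.sum_sum_type, Fintype.sum_sum_type] at hx
    simp only [Sum.elim_inl, Sum.elim_inr] at hx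
    rw [← hx]
    ring
  case left_inv =>
    intro d hd
    simp only [Finset.mem_filter, Finset.mem_product] at hd
    obtain ⟨⟨h1, h2, h3⟩, _⟩ := hd
    refine Prod.ext ?_ (Prod.ext ?_ ?_)
    · funext i
      by_cases hi : i ∈ L
      · simp [ext0, hi]
      · simp [ext0, hi, (mem_Δ.mp h1) i hi]
    · funext i
      by_cases hi : i ∈ M
      · simp [ext0, hi]
      · simp [ext0, hi, (mem_Δ.mp h2) i hi]
    · funext i
      by_cases hi : i ∈ N
      · simp [ext0, hi]
      · simp [ext0, hi, (mem_Δ.mp h3) i hi]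
  case right_inv =>
    intro x _
    funext j
    rcases j with i | i | i <;> simp [ext0_coe]


lemma Δ_univ {m : ℕ} : Δ (univ : Finset (Fin m)) = univ := by
  ext v; simp [mem_Δ]

open scoped Classical in
lemma count_full {m : ℕ} (a b c : V m) (h : ¬(a = 0 ∧ b = 0 ∧ c = 0)) :
    ((univ : Finset (V m × V m × V m)).filter
      (fun d => dot a d.1 + dot b d.2.1 + dot c d.2.2 = 1)).card = 2 ^ (3 * m - 1) := by
  have h' : (∃ i ∈ (univ : Finset (Fin m)), a i ≠ 0) ∨ (∃ i ∈ (univ : Finset (Fin m)), b i ≠ 0)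
      ∨ (∃ i ∈ (univ : Finset (Fin m)), c i ≠ 0) := by
    by_contra hc
    push_neg at hc
    exact h ⟨funext fun i => hc.1 i (mem_univ i), funext fun i => hc.2.1 i (mem_univ i),
      funext fun i => hc.2.2 i (mem_univ i)⟩
  have key := count_delta univ univ univ a b c h'
  have hc : (univ : Finset (Fin m)).card = m := by simp
  rw [Δ_univ] at key
  simp only [Finset.univ_product_univ] at key
  rw [key, hc]
  congr 1
  omega

lemma codeMapE_apply {m : ℕ} (E : Finset (V m × V m × V m)) (α β γ : V m)
    (d : {x // x ∈ E}) :
    codeMapE E (α, β, γ) d = dot α d.1.1 + dot (β + γ) d.1.2.1 + dot β d.1.2.2 := by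
  simp [codeMapE, dotL, dot, LinearMap.smulRight, mul_comm]

open scoped Classical in
lemma wtv_restrict {m : ℕ} (E : Finset (V m × V m × V m)) (f : V m × V m × V m → ZMod 2) :
    wtv (fun d : {x // x ∈ E} => f d.1) = (E.filter (fun d => f d ≠ 0)).card := by
  rw [wtv]
  apply Finset.card_bij' (fun d _ => d.1) (fun d hd => ⟨d, (Finset.mem_filter.mp hd).1⟩)
  case hi =>
    intro d hd; simp only [Finset.mem_filter, Finset.mem_univ, true_and] at hd ⊢
    exact ⟨d.2, hd⟩
  case hj =>
    intro d hd; simp only [Finset.mem_filter, Finset.mem_univ, true_and] at hd ⊢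
    exact hd.2
  case left_inv => intro d _; rfl
  case right_inv => intro d _; rfl

open scoped Classical in
lemma wt_formula {m : ℕ} (E : Finset (V m × V m × V m)) (α β γ : V m) :
    wtv (codeMapE E (α, β, γ))
      = (E.filter (fun d => dot α d.1 + dot (β + γ) d.2.1 + dot β d.2.2 = 1)).card := by
  have h1 : (codeMapE E (α, β, γ)) = fun d : {x // x ∈ E} =>
      (fun e : V m × V m × V m => dot α e.1 + dot (β + γ) e.2.1 + dot β e.2.2) d.1 :=
    funext (codeMapE_apply E α β γ)
  rw [h1, wtv_restrict E (fun e => dot α e.1 + dot (β + γ) e.2.1 + dot β e.2.2)]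
  congr 1
  apply Finset.filter_congr
  intro d _
  exact zmod2_ne_zero_iff _

open scoped Classical in
lemma filter_compl_add {α : Type} [Fintype α] [DecidableEq α] (D : Finset α) (p : α → Prop)
    [DecidablePred p] :
    (D.filter p).card + (Dᶜ.filter p).card = ((univ : Finset α).filter p).card := by
  rw [← Finset.card_union_of_disjoint
      (Finset.disjoint_filter_filter disjoint_compl_right),
    ← Finset.filter_union, Finset.union_compl]

lemma dot_zero_left {m : ℕ} (v : V m) : dot 0 v = 0 := by simp [dot]

open scoped Classical in
lemma wt_cases {m : ℕ} (L M N : Finset (Fin m)) (α β γ : V m) :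
    wtv (codeMapE (Δ L ×ˢ Δ M ×ˢ Δ N)ᶜ (α, β, γ)) =
      if (∃ i ∈ L, α i ≠ 0) ∨ (∃ i ∈ M, (β + γ) i ≠ 0) ∨ (∃ i ∈ N, β i ≠ 0) then
        2 ^ (3 * m - 1) - 2 ^ (L.card + M.card + N.card - 1)
      else if (α, β, γ) = (0 : V m × V m × V m) then 0 else 2 ^ (3 * m - 1) := by
  rw [wt_formula]
  have hsplit := filter_compl_add (Δ L ×ˢ Δ M ×ˢ Δ N)
    (fun d : V m × V m × V m => dot α d.1 + dot (β + γ) d.2.1 + dot β d.2.2 = 1)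
  by_cases hR : (∃ i ∈ L, α i ≠ 0) ∨ (∃ i ∈ M, (β + γ) i ≠ 0) ∨ (∃ i ∈ N, β i ≠ 0)
  · rw [if_pos hR]
    have hD := count_delta L M N α (β + γ) β hR
    have hfull : ¬(α = 0 ∧ (β + γ) = 0 ∧ β = 0) := by
      rintro ⟨h1, h2, h3⟩
      rcases hR with ⟨i, _, h⟩ | ⟨i, _, h⟩ | ⟨i, _, h⟩
      · exact h (congrFun h1 i)
      · exact h (congrFun h2 i)
      · exact h (congrFun h3 i)
    have hfull' := count_full α (β + γ) β hfull
    omega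
  · rw [if_neg hR]
    push_neg at hR
    obtain ⟨hL0, hM0, hN0⟩ := hR
    have hD : ((Δ L ×ˢ Δ M ×ˢ Δ N).filter
        (fun d : V m × V m × V m => dot α d.1 + dot (β + γ) d.2.1 + dot β d.2.2 = 1)).card
          = 0 := by
      rw [Finset.card_eq_zero, Finset.filter_eq_empty_iff]
      intro d hd
      simp only [Finset.mem_product] at hd
      rw [dot_mem_delta L α d.1 hd.1, dot_mem_delta M (β + γ) d.2.1 hd.2.1,
        dot_mem_delta N β d.2.2 hd.2.2]
      have e1 : (∑ i : {i // i ∈ L}, d.1 i.1 * α i.1) = 0 :=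
        Finset.sum_eq_zero fun i _ => by rw [hL0 i.1 i.2, mul_zero]
      have e2 : (∑ i : {i // i ∈ M}, d.2.1 i.1 * (β + γ) i.1) = 0 :=
        Finset.sum_eq_zero fun i _ => by rw [hM0 i.1 i.2, mul_zero]
      have e3 : (∑ i : {i // i ∈ N}, d.2.2 i.1 * β i.1) = 0 :=
        Finset.sum_eq_zero fun i _ => by rw [hN0 i.1 i.2, mul_zero]
      rw [e1, e2, e3]
      decide
    by_cases h0 : (α, β, γ) = (0 : V m × V m × V m)
    · rw [if_pos h0]
      have hα : α = 0 := congrArg Prod.fst h0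
      have hβ : β = 0 := congrArg (fun p => p.2.1) h0
      have hγ : γ = 0 := congrArg (fun p => p.2.2) h0
      rw [Finset.card_eq_zero, Finset.filter_eq_empty_iff]
      intro d _
      rw [hα, hβ, hγ]
      simp [dot_zero_left]
    · rw [if_neg h0]
      have hfull : ¬(α = 0 ∧ (β + γ) = 0 ∧ β = 0) := by
        rintro ⟨h1, h2, h3⟩
        apply h0
        have hγ : γ = 0 := by
          have := h2
          rw [h3, zero_add] at this
          exact this
        rw [h1, h3, hγ]
        rfl
      have hfull' := count_full α (β + γ) β hfull
      omega


lemma zmod2_cancel : ∀ a b : ZMod 2, a + (b + a) = b := by decide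

lemma addV_cancel {m : ℕ} (x y : V m) : x + (y + x) = y :=
  funext fun i => zmod2_cancel (x i) (y i)

lemma zmod2_cancel' : ∀ a b : ZMod 2, (a + b) + a = b := by decide

lemma addV_cancel' {m : ℕ} (x y : V m) : (x + y) + x = y :=
  funext fun i => zmod2_cancel' (x i) (y i)

open scoped Classical in
lemma count_nR {m : ℕ} (L M N : Finset (Fin m)) :
    ((univ : Finset (V m × V m × V m)).filter
      (fun k => ¬((∃ i ∈ L, k.1 i ≠ 0) ∨ (∃ i ∈ M, (k.2.1 + k.2.2) i ≠ 0)
        ∨ (∃ i ∈ N, k.2.1 i ≠ 0)))).card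
      = 2 ^ (3 * m - (L.card + M.card + N.card)) := by
  have hbij : ((univ : Finset (V m × V m × V m)).filter
      (fun k => ¬((∃ i ∈ L, k.1 i ≠ 0) ∨ (∃ i ∈ M, (k.2.1 + k.2.2) i ≠ 0)
        ∨ (∃ i ∈ N, k.2.1 i ≠ 0)))).card = (Δ Lᶜ ×ˢ Δ Mᶜ ×ˢ Δ Nᶜ).card := by
    apply Finset.card_bij' (fun k _ => (k.1, k.2.1 + k.2.2, k.2.1))
      (fun d _ => (d.1, d.2.2, d.2.1 + d.2.2))
    case hi =>
      intro k hk
      simp only [Finset.mem_filter, Finset.mem_univ, true_and] at hk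
      push_neg at hk
      obtain ⟨h1, h2, h3⟩ := hk
      simp only [Finset.mem_product]
      exact ⟨mem_Δ.mpr fun i hi => h1 i (by simpa using hi),
             mem_Δ.mpr fun i hi => h2 i (by simpa using hi),
             mem_Δ.mpr fun i hi => h3 i (by simpa using hi)⟩
    case hj =>
      intro d hd
      simp only [Finset.mem_product] at hd
      simp only [Finset.mem_filter, Finset.mem_univ, true_and]
      push_neg
      refine ⟨fun i hi => mem_Δ.mp hd.1 i (by simpa using hi), fun i hi => ?_, fun i hi =>
        mem_Δ.mp hd.2.2 i (by simpa using hi)⟩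
      rw [addV_cancel d.2.2 d.2.1]
      exact mem_Δ.mp hd.2.1 i (by simpa using hi)
    case left_inv =>
      intro k _
      refine Prod.ext rfl (Prod.ext rfl ?_)
      exact addV_cancel' k.2.1 k.2.2
    case right_inv =>
      intro d _
      refine Prod.ext rfl (Prod.ext ?_ rfl)
      exact addV_cancel d.2.2 d.2.1
  rw [hbij, Finset.card_product, Finset.card_product, delta_card, delta_card, delta_card]
  have hL : L.card ≤ m := by simpa using Finset.card_le_univ L
  have hM : M.card ≤ m := by simpa using Finset.card_le_univ M
  have hN : N.card ≤ m := by simpa using Finset.card_le_univ N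
  have hcL : (Lᶜ).card = m - L.card := by
    rw [Finset.card_compl]; simp
  have hcM : (Mᶜ).card = m - M.card := by
    rw [Finset.card_compl]; simp
  have hcN : (Nᶜ).card = m - N.card := by
    rw [Finset.card_compl]; simp
  rw [hcL, hcM, hcN, ← pow_add, ← pow_add]
  congr 1
  omega

lemma s_lt {m : ℕ} (L M N : Finset (Fin m))
    (hne : ¬(L = Finset.univ ∧ M = Finset.univ ∧ N = Finset.univ)) :
    L.card + M.card + N.card < 3 * m := by
  have hL : L.card ≤ m := by simpa using Finset.card_le_univ L
  have hM : M.card ≤ m := by simpa using Finset.card_le_univ M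
  have hN : N.card ≤ m := by simpa using Finset.card_le_univ N
  have hlt : ∀ S : Finset (Fin m), S ≠ Finset.univ → S.card < m := by
    intro S hS
    have := Finset.card_lt_card (Finset.ssubset_univ_iff.mpr hS)
    simpa using this
  have : L ≠ Finset.univ ∨ M ≠ Finset.univ ∨ N ≠ Finset.univ := by tauto
  rcases this with h | h | h
  · have := hlt L h; omega
  · have := hlt M h; omega
  · have := hlt N h; omega

open scoped Classical in
lemma wtv_zero {m : ℕ} (E : Finset (V m × V m × V m)) :
    wtv (0 : {x // x ∈ E} → ZMod 2) = 0 := by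
  simp [wtv]

open scoped Classical in
lemma code_inj {m : ℕ} (L M N : Finset (Fin m))
    (hlt : L.card + M.card + N.card < 3 * m) :
    Function.Injective (codeMapE (Δ L ×ˢ Δ M ×ˢ Δ N)ᶜ) := by
  apply LinearMap.ker_eq_bot.mp
  apply LinearMap.ker_eq_bot'.mpr
  rintro ⟨α, β, γ⟩ hk
  by_contra hk0
  have hw := wt_cases L M N α β γ
  rw [hk, wtv_zero] at hw
  have hp1 : (2:ℕ) ^ (L.card + M.card + N.card - 1) < 2 ^ (3 * m - 1) :=
    Nat.pow_lt_pow_right (by norm_num) (by omega)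
  have hp2 : 0 < (2:ℕ) ^ (3 * m - 1) := Nat.pow_pos (by norm_num)
  by_cases h1 : (∃ i ∈ L, α i ≠ 0) ∨ (∃ i ∈ M, (β + γ) i ≠ 0) ∨ (∃ i ∈ N, β i ≠ 0)
  · rw [if_pos h1] at hw; omega
  · rw [if_neg h1] at hw
    by_cases h2 : (α, β, γ) = (0 : V m × V m × V m)
    · exact hk0 h2
    · rw [if_neg h2] at hw; omega

lemma card_VVV (m : ℕ) : Fintype.card (V m × V m × V m) = 2 ^ (3 * m) := by
  rw [Fintype.card_prod, Fintype.card_prod, Fintype.card_fun]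
  have : Fintype.card (ZMod 2) = 2 := by simp
  rw [this, Fintype.card_fin, ← pow_add, ← pow_add]
  congr 1
  ring

lemma card_D {m : ℕ} (L M N : Finset (Fin m)) :
    (Δ L ×ˢ Δ M ×ˢ Δ N).card = 2 ^ (L.card + M.card + N.card) := by
  rw [Finset.card_product, Finset.card_product, delta_card, delta_card, delta_card,
    ← pow_add, ← pow_add]
  congr 1
  ring

lemma geom2 : ∀ n : ℕ, ∑ i ∈ Finset.range n, (2:ℤ) ^ i = 2 ^ n - 1 := by
  intro n
  induction n with
  | zero => simp
  | succ n ih => rw [Finset.sum_range_succ, ih]; ring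

lemma sum_pow_reflect (n : ℕ) : ∑ i ∈ Finset.range n, (2:ℤ) ^ (n - 1 - i) = 2 ^ n - 1 := by
  rw [Finset.sum_range_reflect (fun i => (2:ℤ) ^ i) n, geom2]

lemma griesmer_sum (s n : ℕ) (h1 : 1 ≤ s) (h2 : s < n) :
    ∑ i ∈ Finset.range n, ⌈((2 ^ (n - 1) - 2 ^ (s - 1) : ℚ)) / 2 ^ i⌉
      = (2 ^ n - 2 ^ s : ℤ) := by
  have hterm : ∀ i ∈ Finset.range n,
      ⌈((2 ^ (n - 1) - 2 ^ (s - 1) : ℚ)) / 2 ^ i⌉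
        = (2 ^ (n - 1 - i) : ℤ) - (if i < s then 2 ^ (s - 1 - i) else 0) := by
    intro i hi
    rw [Finset.mem_range] at hi
    by_cases his : i < s
    · rw [if_pos his]
      have hx : ((2 ^ (n - 1) - 2 ^ (s - 1) : ℚ)) / 2 ^ i
          = (((2 ^ (n - 1 - i) - 2 ^ (s - 1 - i) : ℤ)) : ℚ) := by
        rw [div_eq_iff (by positivity)]
        push_cast
        rw [sub_mul, ← pow_add, ← pow_add]
        congr 2 <;> omega
      rw [hx, Int.ceil_intCast]
    · rw [if_neg his, sub_zero]
      have hpos : (0:ℚ) < 2 ^ i := by positivity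
      have e1 : (2:ℚ) ^ (n - 1 - i) * 2 ^ i = 2 ^ (n - 1) := by
        rw [← pow_add]; congr 1; omega
      have e2 : (2:ℚ) ^ (s - 1) < 2 ^ i := by
        have hnat : (2:ℕ) ^ (s - 1) < 2 ^ i := Nat.pow_lt_pow_right (by norm_num) (by omega)
        exact_mod_cast hnat
      have e3 : (0:ℚ) < 2 ^ (s - 1) := by positivity
      rw [Int.ceil_eq_iff]
      constructor
      · rw [lt_div_iff₀ hpos]
        push_cast
        nlinarith
      · rw [div_le_iff₀ hpos]
        push_cast
        nlinarith
  rw [Finset.sum_congr rfl hterm, Finset.sum_sub_distrib, sum_pow_reflect]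
  have hsec : ∑ i ∈ Finset.range n, (if i < s then (2:ℤ) ^ (s - 1 - i) else 0)
      = 2 ^ s - 1 := by
    rw [← Finset.sum_filter]
    have hfe : (Finset.range n).filter (fun i => i < s) = Finset.range s := by
      ext x
      simp only [Finset.mem_filter, Finset.mem_range]
      omega
    rw [hfe, sum_pow_reflect]
  rw [hsec]
  ring

/-- Theorem 4.1(9): the code on the coordinate set
`E = (F₂^m)³ \ (Δ_L × Δ_M × Δ_N)` is a two-weight binary
`[2^{3m} − 2^s, 3m, 2^{3m−1} − 2^{s−1}]` Griesmer code with the stated weight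
distribution. -/
theorem stmt13 (m : ℕ) (hm : 1 ≤ m) (L M N : Finset (Fin m))
    (hs : 1 ≤ L.card + M.card + N.card)
    (hne : ¬(L = Finset.univ ∧ M = Finset.univ ∧ N = Finset.univ)) :
    (Fintype.card {x // x ∈ (Δ L ×ˢ Δ M ×ˢ Δ N)ᶜ} = 2 ^ (3 * m) - 2 ^ (L.card + M.card + N.card)) ∧
    (Module.finrank (ZMod 2) ↥(LinearMap.range (codeMapE (Δ L ×ˢ Δ M ×ˢ Δ N)ᶜ)) = 3 * m) ∧
    IsLeast {w : ℕ | ∃ c ∈ LinearMap.range (codeMapE (Δ L ×ˢ Δ M ×ˢ Δ N)ᶜ), c ≠ 0 ∧ wtv c = w} (2 ^ (3 * m - 1) - 2 ^ (L.card + M.card + N.card - 1)) ∧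
    ((∑ c ∈ Finset.univ.filter (fun c => c ∈ LinearMap.range (codeMapE (Δ L ×ˢ Δ M ×ˢ Δ N)ᶜ)),
        (X : ℤ[X]) ^ wtv c)
      = 1 + Polynomial.C ((2 : ℤ) ^ (3 * m) - 2 ^ (3 * m - (L.card + M.card + N.card))) * X ^ (2 ^ (3 * m - 1) - 2 ^ (L.card + M.card + N.card - 1))
          + Polynomial.C ((2 : ℤ) ^ (3 * m - (L.card + M.card + N.card)) - 1) * X ^ (2 ^ (3 * m - 1))) ∧
    (∑ i ∈ Finset.range (3 * m), ⌈((2 ^ (3 * m - 1) - 2 ^ (L.card + M.card + N.card - 1) : ℚ)) / 2 ^ i⌉ = (2 ^ (3 * m) - 2 ^ (L.card + M.card + N.card) : ℤ)) := by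
  classical
  have hlt : L.card + M.card + N.card < 3 * m := s_lt L M N hne
  have hinj := code_inj L M N hlt
  have hp1 : (2:ℕ) ^ (L.card + M.card + N.card - 1) < 2 ^ (3 * m - 1) :=
    Nat.pow_lt_pow_right (by norm_num) (by omega)
  refine ⟨?_, ?_, ⟨?_, ?_⟩, ?_, ?_⟩
  · rw [Fintype.card_coe, Finset.card_compl, card_D, card_VVV]
  · rw [LinearMap.finrank_range_of_inj hinj, Module.finrank_prod, Module.finrank_prod,
      Module.finrank_fintype_fun_eq_card, Fintype.card_fin]
    ring
  · obtain ⟨α, β, γ, hR⟩ : ∃ α β γ : V m,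
        (∃ i ∈ L, α i ≠ 0) ∨ (∃ i ∈ M, (β + γ) i ≠ 0) ∨ (∃ i ∈ N, β i ≠ 0) := by
      have hone : 0 < L.card ∨ 0 < M.card ∨ 0 < N.card := by omega
      rcases hone with h | h | h
      · obtain ⟨i₀, hi₀⟩ := Finset.card_pos.mp h
        exact ⟨(fun j => if j = i₀ then 1 else 0), 0, 0,
          Or.inl ⟨i₀, hi₀, by simp⟩⟩
      · obtain ⟨i₀, hi₀⟩ := Finset.card_pos.mp h
        exact ⟨0, 0, (fun j => if j = i₀ then 1 else 0),
          Or.inr (Or.inl ⟨i₀, hi₀, by simp⟩)⟩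
      · obtain ⟨i₀, hi₀⟩ := Finset.card_pos.mp h
        exact ⟨0, (fun j => if j = i₀ then 1 else 0), 0,
          Or.inr (Or.inr ⟨i₀, hi₀, by simp⟩)⟩
    refine ⟨codeMapE _ (α, β, γ), LinearMap.mem_range_self _ _, ?_, ?_⟩
    · intro h0
      have hw := wt_cases L M N α β γ
      rw [h0, wtv_zero, if_pos hR] at hw
      omega
    · rw [wt_cases L M N α β γ, if_pos hR]
  · rintro w ⟨c, hc, hc0, rfl⟩
    obtain ⟨k, rfl⟩ := hc
    obtain ⟨α, β, γ⟩ := k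
    rw [wt_cases L M N α β γ]
    by_cases h1 : (∃ i ∈ L, α i ≠ 0) ∨ (∃ i ∈ M, (β + γ) i ≠ 0) ∨ (∃ i ∈ N, β i ≠ 0)
    · rw [if_pos h1]
    · rw [if_neg h1]
      by_cases h2 : (α, β, γ) = (0 : V m × V m × V m)
      · exact absurd (by rw [h2]; exact map_zero _) hc0
      · rw [if_neg h2]
        exact Nat.sub_le _ _
  · -- weight enumerator
    have himg : (Finset.univ.filter
        (fun c => c ∈ LinearMap.range (codeMapE (Δ L ×ˢ Δ M ×ˢ Δ N)ᶜ)))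
        = Finset.univ.image (codeMapE (Δ L ×ˢ Δ M ×ˢ Δ N)ᶜ) := by
      ext c
      simp only [Finset.mem_filter, Finset.mem_univ, true_and, Finset.mem_image,
        LinearMap.mem_range]
    rw [himg, Finset.sum_image (fun x _ y _ h => hinj h)]
    have hwt : ∀ k : V m × V m × V m,
        wtv (codeMapE (Δ L ×ˢ Δ M ×ˢ Δ N)ᶜ k)
          = if (∃ i ∈ L, k.1 i ≠ 0) ∨ (∃ i ∈ M, (k.2.1 + k.2.2) i ≠ 0)
              ∨ (∃ i ∈ N, k.2.1 i ≠ 0)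
            then 2 ^ (3 * m - 1) - 2 ^ (L.card + M.card + N.card - 1)
            else if k = 0 then 0 else 2 ^ (3 * m - 1) := by
      rintro ⟨α, β, γ⟩
      exact wt_cases L M N α β γ
    rw [Finset.sum_congr rfl (fun k _ => by rw [hwt k])]
    rw [← Finset.sum_filter_add_sum_filter_not Finset.univ
      (fun k : V m × V m × V m => (∃ i ∈ L, k.1 i ≠ 0) ∨ (∃ i ∈ M, (k.2.1 + k.2.2) i ≠ 0)
        ∨ (∃ i ∈ N, k.2.1 i ≠ 0))]
    have hcnR := count_nR L M N
    have hcards : ((Finset.univ : Finset (V m × V m × V m)).filter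
        (fun k => (∃ i ∈ L, k.1 i ≠ 0) ∨ (∃ i ∈ M, (k.2.1 + k.2.2) i ≠ 0)
          ∨ (∃ i ∈ N, k.2.1 i ≠ 0))).card
        = 2 ^ (3 * m) - 2 ^ (3 * m - (L.card + M.card + N.card)) := by
      have htot := Finset.card_filter_add_card_filter_not
        (s := (Finset.univ : Finset (V m × V m × V m)))
        (p := fun k => (∃ i ∈ L, k.1 i ≠ 0) ∨ (∃ i ∈ M, (k.2.1 + k.2.2) i ≠ 0)
          ∨ (∃ i ∈ N, k.2.1 i ≠ 0))
      rw [Finset.card_univ, card_VVV] at htot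
      omega
    have hsum1 : (∑ k ∈ (Finset.univ : Finset (V m × V m × V m)).filter
        (fun k => (∃ i ∈ L, k.1 i ≠ 0) ∨ (∃ i ∈ M, (k.2.1 + k.2.2) i ≠ 0)
          ∨ (∃ i ∈ N, k.2.1 i ≠ 0)),
        (X : ℤ[X]) ^ (if (∃ i ∈ L, k.1 i ≠ 0) ∨ (∃ i ∈ M, (k.2.1 + k.2.2) i ≠ 0)
              ∨ (∃ i ∈ N, k.2.1 i ≠ 0)
            then 2 ^ (3 * m - 1) - 2 ^ (L.card + M.card + N.card - 1)
            else if k = 0 then 0 else 2 ^ (3 * m - 1)))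
        = (2 ^ (3 * m) - 2 ^ (3 * m - (L.card + M.card + N.card))) •
            (X : ℤ[X]) ^ (2 ^ (3 * m - 1) - 2 ^ (L.card + M.card + N.card - 1)) := by
      rw [Finset.sum_congr rfl
        (fun k hk => by rw [if_pos (Finset.mem_filter.mp hk).2]),
        Finset.sum_const, hcards]
    have h0mem : (0 : V m × V m × V m) ∈ (Finset.univ : Finset (V m × V m × V m)).filter
        (fun k => ¬((∃ i ∈ L, k.1 i ≠ 0) ∨ (∃ i ∈ M, (k.2.1 + k.2.2) i ≠ 0)
          ∨ (∃ i ∈ N, k.2.1 i ≠ 0))) := by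
      simp
    have hsum2 : (∑ k ∈ (Finset.univ : Finset (V m × V m × V m)).filter
        (fun k => ¬((∃ i ∈ L, k.1 i ≠ 0) ∨ (∃ i ∈ M, (k.2.1 + k.2.2) i ≠ 0)
          ∨ (∃ i ∈ N, k.2.1 i ≠ 0))),
        (X : ℤ[X]) ^ (if (∃ i ∈ L, k.1 i ≠ 0) ∨ (∃ i ∈ M, (k.2.1 + k.2.2) i ≠ 0)
              ∨ (∃ i ∈ N, k.2.1 i ≠ 0)
            then 2 ^ (3 * m - 1) - 2 ^ (L.card + M.card + N.card - 1)
            else if k = 0 then 0 else 2 ^ (3 * m - 1)))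
        = 1 + (2 ^ (3 * m - (L.card + M.card + N.card)) - 1) •
            (X : ℤ[X]) ^ (2 ^ (3 * m - 1)) := by
      rw [← Finset.add_sum_erase _ _ h0mem]
      have hz : (if (∃ i ∈ L, (0 : V m × V m × V m).1 i ≠ 0)
            ∨ (∃ i ∈ M, ((0 : V m × V m × V m).2.1 + (0 : V m × V m × V m).2.2) i ≠ 0)
            ∨ (∃ i ∈ N, (0 : V m × V m × V m).2.1 i ≠ 0)
          then 2 ^ (3 * m - 1) - 2 ^ (L.card + M.card + N.card - 1)
          else if (0 : V m × V m × V m) = 0 then 0 else 2 ^ (3 * m - 1)) = 0 := by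
        simp
      rw [hz, pow_zero]
      congr 1
      rw [Finset.sum_congr rfl (fun k hk => ?_), Finset.sum_const,
        Finset.card_erase_of_mem h0mem, hcnR]
      have hk' := Finset.mem_erase.mp hk
      rw [if_neg (Finset.mem_filter.mp hk'.2).2, if_neg hk'.1]
    rw [hsum1, hsum2]
    have hle1 : (2:ℕ) ^ (3 * m - (L.card + M.card + N.card)) ≤ 2 ^ (3 * m) :=
      Nat.pow_le_pow_right (by norm_num) (by omega)
    have hle2 : (1:ℕ) ≤ 2 ^ (3 * m - (L.card + M.card + N.card)) :=
      Nat.one_le_two_pow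
    rw [nsmul_eq_mul, nsmul_eq_mul, Nat.cast_sub hle1, Nat.cast_sub hle2]
    push_cast
    rw [map_sub, map_sub, map_pow, map_pow]
    simp only [map_ofNat, map_one]
    push_cast
    ring
  · exact griesmer_sum _ _ hs hlt
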